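/- Let (γ_k)_{k≥1} be an increasing sequence of nonnegative reals with partial sums Γ_k = ∑_{i=1}^k γ_i satisfying k² ≤ Γ_k ≤ k² + k for all k ≥ 1. Then for every k ≥ 1, 2k − 2√k ≤ γ_k ≤ 2k + 2√k. -/

import Mathlib

/-- If `(γ_k)_{k≥1}` is a nondecreasing sequence of nonnegative reals whose
partial sums `Γ_k = ∑_{i=1}^k γ_i` satisfy `k² ≤ Γ_k ≤ k² + k` for all
`k ≥ 1`, then `2k − 2√k ≤ γ_k ≤ 2k + 2√k` for every `k ≥ 1`. -/
theorem stmt8 (γ : ℕ → ℝ) (hmono : Monotone γ) (hpos : ∀ k, 0 ≤ γ k)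
    (Γ : ℕ → ℝ) (hΓ : ∀ k, Γ k = ∑ i ∈ Finset.Icc 1 k, γ i)
    (hbound : ∀ k : ℕ, 1 ≤ k → (k : ℝ) ^ 2 ≤ Γ k ∧ Γ k ≤ (k : ℝ) ^ 2 + k) :
    ∀ k : ℕ, 1 ≤ k →
      2 * (k : ℝ) - 2 * Real.sqrt k ≤ γ k ∧ γ k ≤ 2 * (k : ℝ) + 2 * Real.sqrt k := by
  have hΓ' : ∀ m, Γ m = ∑ i ∈ Finset.Ioc 0 m, γ i := by
    intro m
    rw [hΓ, ← Finset.Icc_add_one_left_eq_Ioc, Nat.zero_add]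
  have hΓ0 : Γ 0 = 0 := by simp [hΓ']
  have hlo : ∀ m : ℕ, (m : ℝ) ^ 2 ≤ Γ m := by
    intro m
    rcases Nat.eq_zero_or_pos m with h | h
    · simp [h, hΓ0]
    · exact (hbound m h).1
  have hup : ∀ m : ℕ, Γ m ≤ (m : ℝ) ^ 2 + m := by
    intro m
    rcases Nat.eq_zero_or_pos m with h | h
    · simp [h, hΓ0]
    · exact (hbound m h).2
  have hdiff : ∀ m n : ℕ, m ≤ n → Γ n = Γ m + ∑ i ∈ Finset.Ioc m n, γ i := by
    intro m n hmn
    rw [hΓ', hΓ', Finset.sum_Ioc_consecutive _ (Nat.zero_le m) hmn]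
  intro k hk
  set s := Real.sqrt (k : ℝ) with hs
  have hk1 : (1 : ℝ) ≤ (k : ℝ) := by exact_mod_cast hk
  have hs0 : 0 < s := Real.sqrt_pos.mpr (by linarith)
  have hssq : s * s = (k : ℝ) := Real.mul_self_sqrt (by linarith)
  set t := ⌈s⌉₊ with ht
  have hst : s ≤ (t : ℝ) := Nat.le_ceil s
  have hts : (t : ℝ) ≤ s + 1 := le_of_lt (Nat.ceil_lt_add_one hs0.le)
  have ht1 : 1 ≤ t := by
    rw [ht, Nat.one_le_ceil_iff]; exact hs0
  have htk : t ≤ k := by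
    rw [ht, Nat.ceil_le]
    calc s ≤ s * s := le_mul_of_one_le_left hs0.le (by nlinarith)
    _ = (k : ℝ) := hssq
  have ht0 : (0 : ℝ) < (t : ℝ) := by exact_mod_cast ht1
  constructor
  · -- lower bound: use window Ioc (k-t) k
    have hm : k - t ≤ k := Nat.sub_le _ _
    have hcast : ((k - t : ℕ) : ℝ) = (k : ℝ) - t := by
      rw [Nat.cast_sub htk]
    have hsum : ∑ i ∈ Finset.Ioc (k - t) k, γ i ≤ (t : ℝ) * γ k := by
      have := Finset.sum_le_card_nsmul (Finset.Ioc (k - t) k) γ (γ k)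
        (fun i hi => hmono (Finset.mem_Ioc.mp hi).2)
      rw [Nat.card_Ioc] at this
      have hcard : k - (k - t) = t := Nat.sub_sub_self htk
      rw [hcard, nsmul_eq_mul] at this
      exact_mod_cast this
    have h1 : (k : ℝ) ^ 2 - (((k : ℝ) - t) ^ 2 + ((k : ℝ) - t)) ≤ (t : ℝ) * γ k := by
      have := hdiff (k - t) k hm
      have h2 := hlo k
      have h3 := hup (k - t)
      rw [hcast] at h3
      linarith
    nlinarith [hsum, h1, hssq, hst, hts, hs0, ht0]
  · -- upper bound: use window Ioc (k-1) (k-1+t)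
    have hm : k - 1 ≤ k - 1 + t := Nat.le_add_right _ _
    have hcast : ((k - 1 : ℕ) : ℝ) = (k : ℝ) - 1 := by
      rw [Nat.cast_sub hk]; norm_num
    have hcast2 : ((k - 1 + t : ℕ) : ℝ) = (k : ℝ) - 1 + t := by
      rw [Nat.cast_add, hcast]
    have hsum : (t : ℝ) * γ k ≤ ∑ i ∈ Finset.Ioc (k - 1) (k - 1 + t), γ i := by
      have := Finset.card_nsmul_le_sum (Finset.Ioc (k - 1) (k - 1 + t)) γ (γ k)
        (fun i hi => by
          apply hmono
          have := (Finset.mem_Ioc.mp hi).1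
          omega)
      rw [Nat.card_Ioc, Nat.add_sub_cancel_left, nsmul_eq_mul] at this
      exact_mod_cast this
    have h1 : (t : ℝ) * γ k ≤ (((k : ℝ) - 1 + t) ^ 2 + ((k : ℝ) - 1 + t)) - ((k : ℝ) - 1) ^ 2 := by
      have := hdiff (k - 1) (k - 1 + t) hm
      have h2 := hlo (k - 1)
      have h3 := hup (k - 1 + t)
      rw [hcast] at h2
      rw [hcast2] at h3
      linarith
    nlinarith [h1, hssq, hst, hts, hs0, ht0]
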